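/- Let η ≥ 0 be a random variable with Laplace-type transform φ(t) := E[exp(−t e^{−η})]. Then the function z(t) := φ(e^t) − E[e^{−η}]·exp(−e^t) is nonincreasing in t ∈ ℝ. -/

import Mathlib

open MeasureTheory ProbabilityTheory Real Set

lemma key_antitoneOn {a : ℝ} (ha0 : 0 ≤ a) (ha1 : a ≤ 1) :
    AntitoneOn (fun x => Real.exp (-a * x) - a * Real.exp (-x)) (Set.Ici (0:ℝ)) := by
  apply antitoneOn_of_deriv_nonpos (convex_Ici 0)
  · fun_prop
  · intro x hx
    exact (((Real.differentiable_exp.comp ((differentiable_id.const_mul (-a)))).sub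
      ((Real.differentiable_exp.comp differentiable_neg).const_mul a)).differentiableAt).differentiableWithinAt
  · intro x hx
    rw [interior_Ici] at hx
    have h1 : HasDerivAt (fun x => Real.exp (-a * x)) (Real.exp (-a * x) * (-a)) x := by
      have := ((hasDerivAt_id x).const_mul (-a)).exp
      simpa using this
    have h2 : HasDerivAt (fun x => a * Real.exp (-x)) (a * (Real.exp (-x) * (-1))) x := by
      have := ((hasDerivAt_id x).neg).exp.const_mul a
      simpa using this
    have hd : HasDerivAt (fun x => Real.exp (-a * x) - a * Real.exp (-x)) _ x := h1.sub h2
    rw [hd.deriv]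
    have hxx : -x ≤ -a * x := by nlinarith [(mem_Ioi.mp hx).le]
    have := Real.exp_le_exp.mpr hxx
    nlinarith [Real.exp_pos (-a*x), Real.exp_pos (-x)]

theorem z_antitone
    {Ω : Type*} [MeasurableSpace Ω] (μ : Measure Ω) [IsProbabilityMeasure μ]
    (η : Ω → ℝ) (hηmeas : Measurable η) (hη0 : ∀ᵐ ω ∂μ, 0 ≤ η ω)
    (φ : ℝ → ℝ) (hφ : ∀ t, φ t = ∫ ω, Real.exp (-t * Real.exp (-η ω)) ∂μ) :
    Antitone (fun t : ℝ =>
      φ (Real.exp t) - (∫ ω, Real.exp (-η ω) ∂μ) * Real.exp (-Real.exp t)) := by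
  -- integrability facts
  have hIntA : Integrable (fun ω => Real.exp (-η ω)) μ := by
    apply Integrable.mono' (integrable_const 1)
      (((hηmeas.neg).exp).aestronglyMeasurable)
    filter_upwards [hη0] with ω hω
    rw [Real.norm_eq_abs, abs_of_pos (Real.exp_pos _)]
    exact Real.exp_le_one_iff.mpr (by rw [Pi.neg_apply]; linarith)
  have hIntE : ∀ c : ℝ, 0 ≤ c →
      Integrable (fun ω => Real.exp (-c * Real.exp (-η ω))) μ := by
    intro c hc
    apply Integrable.mono' (integrable_const 1)
    · have : Measurable (fun ω => Real.exp (-c * Real.exp (-η ω))) := by fun_prop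
      exact this.aestronglyMeasurable
    · filter_upwards with ω
      rw [Real.norm_eq_abs, abs_of_pos (Real.exp_pos _)]
      apply Real.exp_le_one_iff.mpr
      have := Real.exp_pos (-η ω)
      nlinarith
  intro s t hst
  simp only [hφ]
  have key : ∀ c : ℝ, 0 < c →
      (∫ ω, Real.exp (-c * Real.exp (-η ω)) ∂μ) - (∫ ω, Real.exp (-η ω) ∂μ) * Real.exp (-c)
      = ∫ ω, (Real.exp (-c * Real.exp (-η ω)) - Real.exp (-η ω) * Real.exp (-c)) ∂μ := by
    intro c hc
    rw [integral_sub (hIntE c hc.le) (hIntA.mul_const _), integral_mul_const]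
  rw [key _ (Real.exp_pos s), key _ (Real.exp_pos t)]
  apply integral_mono_ae
  · exact ((hIntE _ (Real.exp_pos t).le).sub (hIntA.mul_const _))
  · exact ((hIntE _ (Real.exp_pos s).le).sub (hIntA.mul_const _))
  · filter_upwards [hη0] with ω hω
    have ha0 : 0 ≤ Real.exp (-η ω) := (Real.exp_pos _).le
    have ha1 : Real.exp (-η ω) ≤ 1 := Real.exp_le_one_iff.mpr (by linarith)
    have := key_antitoneOn ha0 ha1 (mem_Ici.mpr (Real.exp_pos s).le)
      (mem_Ici.mpr (Real.exp_pos t).le) (Real.exp_le_exp.mpr hst)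
    simpa [mul_comm] using this
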